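/- Let E be a row-finite graph, and let H₁ ⊆ H₂ be hereditary saturated subsets of E⁰. Let M^gr_{H} denote the commutative monoid generated by symbols v(i) for v ∈ H, i ∈ ℤ, subject to v(i) = Σ_{e ∈ s⁻¹(v)} r(e)(i−1) for every non-sink v ∈ H. Then the map sending v(i) ↦ v(i) if v ∈ H₂ \ H₁ and v(i) ↦ 0 if v ∈ H₁ induces a well-defined monoid isomorphism M^gr_{H₂} / M^gr_{H₁} ≅ M^gr_{H₂/H₁}, where H₂/H₁ is the quotient graph with vertices H₂ \ H₁ and edges {e ∈ E¹ : s(e) ∈ H₂, r(e) ∉ H₁}, and the quotient monoid M^gr_{H₂}/M^gr_{H₁} is formed using the congruence a ∼ b iff a + i = b + j for some i, j ∈ M^gr_{H₁}. -/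

import Mathlib

namespace Stmt9

open Finsupp

variable {V E : Type*}

/-- Defining relations of the graded graph monoid `M^gr_{E_H}` of the restriction graph
`E_H` of a hereditary subset `H`: for every non-sink `v ∈ H` and `i ∈ ℤ`,
`v(i) = Σ_{e ∈ s⁻¹(v)} r(e)(i−1)`. -/
def gradedRel (s r : E → V) (H : Set V) (hH : ∀ e, s e ∈ H → r e ∈ H)
    (x y : (↥H × ℤ) →₀ ℕ) : Prop :=
  ∃ (v : ↥H) (i : ℤ), (∃ e, s e = ↑v) ∧
    x = Finsupp.single (v, i) 1 ∧
    y = ∑ᶠ e : {e : E // s e = ↑v},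
      Finsupp.single ((⟨r e.1, hH e.1 (by rw [e.2]; exact v.2)⟩ : ↥H), i - 1) 1

/-- The graded graph monoid `M^gr_{E_H}`, presented by generators `v(i)` (`v ∈ H`,
`i ∈ ℤ`) and the relations above. -/
def Mgr (s r : E → V) (H : Set V) (hH : ∀ e, s e ∈ H → r e ∈ H) :=
  (addConGen (gradedRel s r H hH)).Quotient

noncomputable instance (s r : E → V) (H : Set V) (hH : ∀ e, s e ∈ H → r e ∈ H) :
    AddCommMonoid (Mgr s r H hH) :=
  AddCon.addCommMonoid _

/-- Defining relations of the graded graph monoid `M^gr_{H₂/H₁}` of the quotient graph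
`H₂/H₁` (vertices `H₂ \ H₁`, edges `{e | s e ∈ H₂, r e ∉ H₁}`). -/
def gradedRelQ (s r : E → V) (H₁ H₂ : Set V) (h2 : ∀ e, s e ∈ H₂ → r e ∈ H₂)
    (x y : (↥(H₂ \ H₁) × ℤ) →₀ ℕ) : Prop :=
  ∃ (v : ↥(H₂ \ H₁)) (i : ℤ), (∃ e, s e = ↑v ∧ r e ∉ H₁) ∧
    x = Finsupp.single (v, i) 1 ∧
    y = ∑ᶠ e : {e : E // s e = ↑v ∧ r e ∉ H₁},
      Finsupp.single ((⟨r e.1, ⟨h2 e.1 (by rw [e.2.1]; exact v.2.1), e.2.2⟩⟩ :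
        ↥(H₂ \ H₁)), i - 1) 1

/-- The graded graph monoid of the quotient graph `H₂/H₁`. -/
def MgrQ (s r : E → V) (H₁ H₂ : Set V) (h2 : ∀ e, s e ∈ H₂ → r e ∈ H₂) :=
  (addConGen (gradedRelQ s r H₁ H₂ h2)).Quotient

noncomputable instance (s r : E → V) (H₁ H₂ : Set V) (h2 : ∀ e, s e ∈ H₂ → r e ∈ H₂) :
    AddCommMonoid (MgrQ s r H₁ H₂ h2) :=
  AddCon.addCommMonoid _

/-- The submonoid `M^gr_{H₁}` of `M^gr_{H₂}`, generated by the generators `v(i)` with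
`v ∈ H₁`. -/
noncomputable def subMgr (s r : E → V) (H₁ H₂ : Set V) (h2 : ∀ e, s e ∈ H₂ → r e ∈ H₂) :
    AddSubmonoid (Mgr s r H₂ h2) :=
  AddSubmonoid.closure {x | ∃ (v : ↥H₂) (i : ℤ), ↑v ∈ H₁ ∧
    x = (addConGen (gradedRel s r H₂ h2)).mk' (Finsupp.single (v, i) 1)}

/-- The congruence `a ∼_I b ↔ ∃ i, j ∈ I, a + i = b + j` modulo a submonoid `I`,
defining the quotient monoid `M/I`. -/
def modCon {M : Type*} [AddCommMonoid M] (I : AddSubmonoid M) : AddCon M where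
  r a b := ∃ i ∈ I, ∃ j ∈ I, a + i = b + j
  iseqv := by
    constructor
    · exact fun a => ⟨0, I.zero_mem, 0, I.zero_mem, rfl⟩
    · rintro a b ⟨i, hi, j, hj, h⟩
      exact ⟨j, hj, i, hi, h.symm⟩
    · rintro a b c ⟨i, hi, j, hj, h1⟩ ⟨i', hi', j', hj', h2⟩
      refine ⟨i + i', I.add_mem hi hi', j' + j, I.add_mem hj' hj, ?_⟩
      rw [← add_assoc, h1, add_right_comm, h2, add_assoc]
  add' := by
    rintro a b c d ⟨i, hi, j, hj, h1⟩ ⟨i', hi', j', hj', h2⟩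
    refine ⟨i + i', I.add_mem hi hi', j + j', I.add_mem hj hj', ?_⟩
    rw [add_add_add_comm, h1, h2, add_add_add_comm]


section Aux

variable (s r : E → V) (H₁ H₂ : Set V) (h2 : ∀ e, s e ∈ H₂ → r e ∈ H₂)

theorem mk'_eq_of_rel {M : Type*} [AddCommMonoid M] {R : M → M → Prop} {a b : M}
    (h : R a b) : (addConGen R).mk' a = (addConGen R).mk' b :=
  (AddCon.eq _).mpr (AddConGen.Rel.of _ _ h)

theorem modCon_mk'_eq_zero {M : Type*} [AddCommMonoid M] {I : AddSubmonoid M} {x : M}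
    (hx : x ∈ I) : (modCon I).mk' x = 0 := by
  have h : (modCon I) x 0 := ⟨0, I.zero_mem, x, hx, by simp⟩
  calc (modCon I).mk' x = (modCon I).mk' 0 := (AddCon.eq _).mpr h
    _ = 0 := map_zero _

open scoped Classical in
/-- Image of a generator `v(i)` of `M^gr_{H₂}` in `M^gr_{H₂/H₁}`. -/
noncomputable def fwdGen (p : ↥H₂ × ℤ) : MgrQ s r H₁ H₂ h2 :=
  if h : (p.1 : V) ∈ H₁ then 0
  else (addConGen (gradedRelQ s r H₁ H₂ h2)).mk'
    (Finsupp.single ((⟨(p.1 : V), ⟨p.1.2, h⟩⟩ : ↥(H₂ \ H₁)), p.2) 1)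

theorem fwdGen_mem {p : ↥H₂ × ℤ} (h : (p.1 : V) ∈ H₁) : fwdGen s r H₁ H₂ h2 p = 0 := by
  simp only [fwdGen]
  exact dif_pos h

theorem fwdGen_not_mem {p : ↥H₂ × ℤ} (h : (p.1 : V) ∉ H₁) :
    fwdGen s r H₁ H₂ h2 p = (addConGen (gradedRelQ s r H₁ H₂ h2)).mk'
      (Finsupp.single ((⟨(p.1 : V), ⟨p.1.2, h⟩⟩ : ↥(H₂ \ H₁)), p.2) 1) := by
  simp only [fwdGen]
  exact dif_neg h

noncomputable def fwdHom : ((↥H₂ × ℤ) →₀ ℕ) →+ MgrQ s r H₁ H₂ h2 :=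
  Finsupp.liftAddHom fun p => multiplesHom _ (fwdGen s r H₁ H₂ h2 p)

theorem fwdHom_single (p : ↥H₂ × ℤ) :
    fwdHom s r H₁ H₂ h2 (Finsupp.single p 1) = fwdGen s r H₁ H₂ h2 p := by
  rw [fwdHom, Finsupp.liftAddHom_apply_single, multiplesHom_apply, one_nsmul]

/-- Image of a generator of `M^gr_{H₂/H₁}` in `M^gr_{H₂}/M^gr_{H₁}`. -/
noncomputable def bwdGen (p : ↥(H₂ \ H₁) × ℤ) :
    (modCon (subMgr s r H₁ H₂ h2)).Quotient :=
  (modCon (subMgr s r H₁ H₂ h2)).mk' ((addConGen (gradedRel s r H₂ h2)).mk'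
    (Finsupp.single ((⟨(p.1 : V), p.1.2.1⟩ : ↥H₂), p.2) 1))

noncomputable def bwdHom : ((↥(H₂ \ H₁) × ℤ) →₀ ℕ) →+ (modCon (subMgr s r H₁ H₂ h2)).Quotient :=
  Finsupp.liftAddHom fun p => multiplesHom _ (bwdGen s r H₁ H₂ h2 p)

theorem bwdHom_single (p : ↥(H₂ \ H₁) × ℤ) :
    bwdHom s r H₁ H₂ h2 (Finsupp.single p 1) = bwdGen s r H₁ H₂ h2 p := by
  rw [bwdHom, Finsupp.liftAddHom_apply_single, multiplesHom_apply, one_nsmul]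

theorem fwd_rel (hrow : ∀ v, {e : E | s e = v}.Finite)
    (h1 : ∀ e, s e ∈ H₁ → r e ∈ H₁)
    (h1sat : ∀ v, (∃ e, s e = v) → (∀ e, s e = v → r e ∈ H₁) → v ∈ H₁) :
    ∀ x y, gradedRel s r H₂ h2 x y →
      fwdHom s r H₁ H₂ h2 x = fwdHom s r H₁ H₂ h2 y := by
  classical
  rintro x y ⟨v, i, hne, rfl, rfl⟩
  haveI : Finite {e : E // s e = (v : V)} := (hrow (v : V)).to_subtype
  haveI := Fintype.ofFinite {e : E // s e = (v : V)}
  rw [finsum_eq_sum_of_fintype, map_sum, fwdHom_single]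
  simp only [fwdHom_single]
  by_cases hv : (v : V) ∈ H₁
  · rw [fwdGen_mem s r H₁ H₂ h2 (p := (v, i)) hv]
    exact (Finset.sum_eq_zero fun e _ =>
      fwdGen_mem s r H₁ H₂ h2 (h1 e.1 (by rw [e.2]; exact hv))).symm
  · rw [fwdGen_not_mem s r H₁ H₂ h2 (p := (v, i)) hv]
    obtain ⟨e₀, he₀, hre₀⟩ : ∃ e, s e = (v : V) ∧ r e ∉ H₁ := by
      by_contra hc
      push_neg at hc
      exact hv (h1sat (v : V) hne hc)
    have hrelQ := mk'_eq_of_rel (R := gradedRelQ s r H₁ H₂ h2)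
      ⟨(⟨(v : V), ⟨v.2, hv⟩⟩ : ↥(H₂ \ H₁)), i, ⟨e₀, he₀, hre₀⟩, rfl, rfl⟩
    rw [hrelQ]
    haveI : Finite {e : E // s e = (v : V) ∧ r e ∉ H₁} :=
      Set.Finite.to_subtype ((hrow (v : V)).subset (fun e he => he.1))
    haveI := Fintype.ofFinite {e : E // s e = (v : V) ∧ r e ∉ H₁}
    rw [finsum_eq_sum_of_fintype, map_sum]
    rw [← Finset.sum_filter_add_sum_filter_not Finset.univ
      (fun e : {e : E // s e = (v : V)} => r e.1 ∈ H₁)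
      (fun e : {e : E // s e = (v : V)} =>
        fwdGen s r H₁ H₂ h2 (⟨r e.1, h2 e.1 (by rw [e.2]; exact v.2)⟩, i - 1))]
    have hz := Finset.sum_eq_zero
      (s := Finset.univ.filter (fun e : {e : E // s e = (v : V)} => r e.1 ∈ H₁))
      (fun e he => fwdGen_mem s r H₁ H₂ h2
        (p := (⟨r e.1, h2 e.1 (by rw [e.2]; exact v.2)⟩, i - 1))
        (Finset.mem_filter.mp he).2)
    rw [hz, zero_add]
    refine Finset.sum_bij'
      (fun (e : {e : E // s e = (v : V) ∧ r e ∉ H₁}) _ =>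
        (⟨e.1, e.2.1⟩ : {e : E // s e = (v : V)}))
      (fun e he => (⟨e.1, e.2, (Finset.mem_filter.mp he).2⟩ :
        {e : E // s e = (v : V) ∧ r e ∉ H₁})) ?_ ?_ ?_ ?_ ?_
    · intro a _
      simp only [Finset.mem_filter, Finset.mem_univ, true_and]
      exact a.2.2
    · intro a _; exact Finset.mem_univ _
    · intro a _; rfl
    · intro a _; rfl
    · intro a _
      exact (fwdGen_not_mem s r H₁ H₂ h2
        (p := (⟨r a.1, h2 a.1 (by rw [a.2.1]; exact v.2)⟩, i - 1)) a.2.2).symm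

theorem bwd_rel (hrow : ∀ v, {e : E | s e = v}.Finite) :
    ∀ x y, gradedRelQ s r H₁ H₂ h2 x y →
      bwdHom s r H₁ H₂ h2 x = bwdHom s r H₁ H₂ h2 y := by
  classical
  rintro x y ⟨w, i, ⟨e₀, hs₀, hr₀⟩, rfl, rfl⟩
  haveI : Finite {e : E // s e = (w : V) ∧ r e ∉ H₁} :=
    Set.Finite.to_subtype ((hrow (w : V)).subset (fun e he => he.1))
  haveI := Fintype.ofFinite {e : E // s e = (w : V) ∧ r e ∉ H₁}
  rw [finsum_eq_sum_of_fintype, map_sum, bwdHom_single]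
  simp only [bwdHom_single]
  simp only [bwdGen]
  haveI : Finite {e : E // s e = (w : V)} := (hrow (w : V)).to_subtype
  haveI := Fintype.ofFinite {e : E // s e = (w : V)}
  have hrel := mk'_eq_of_rel (R := gradedRel s r H₂ h2)
    ⟨(⟨(w : V), w.2.1⟩ : ↥H₂), i, ⟨e₀, hs₀⟩, rfl, rfl⟩
  rw [hrel, finsum_eq_sum_of_fintype, map_sum]
  erw [map_sum]
  rw [← Finset.sum_filter_add_sum_filter_not Finset.univ
    (fun e : {e : E // s e = (w : V)} => r e.1 ∈ H₁)]
  have hz := Finset.sum_eq_zero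
    (s := Finset.univ.filter (fun e : {e : E // s e = (w : V)} => r e.1 ∈ H₁))
    (f := fun e : {e : E // s e = (w : V)} =>
      (modCon (subMgr s r H₁ H₂ h2)).mk' ((addConGen (gradedRel s r H₂ h2)).mk'
        (Finsupp.single ((⟨r e.1, h2 e.1 (by rw [e.2]; exact w.2.1)⟩ : ↥H₂), i - 1) 1)))
    (fun e he => modCon_mk'_eq_zero (AddSubmonoid.subset_closure
      ⟨⟨r e.1, h2 e.1 (by rw [e.2]; exact w.2.1)⟩, i - 1,
        (Finset.mem_filter.mp he).2, rfl⟩))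
  rw [hz, zero_add]
  refine (Finset.sum_bij'
    (fun (e : {e : E // s e = (w : V) ∧ r e ∉ H₁}) _ =>
      (⟨e.1, e.2.1⟩ : {e : E // s e = (w : V)}))
    (fun e he => (⟨e.1, e.2, (Finset.mem_filter.mp he).2⟩ :
      {e : E // s e = (w : V) ∧ r e ∉ H₁})) ?_ ?_ ?_ ?_ ?_).symm
  · intro a _
    simp only [Finset.mem_filter, Finset.mem_univ, true_and]
    exact a.2.2
  · intro a _; exact Finset.mem_univ _
  · intro a _; rfl
  · intro a _; rfl
  · intro a _; rfl

end Aux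

/-- for hereditary saturated subsets `H₁ ⊆ H₂` of a row-finite graph, the map
`v(i) ↦ v(i)` for `v ∈ H₂ \ H₁` and `v(i) ↦ 0` for `v ∈ H₁` induces a monoid isomorphism
`M^gr_{H₂} / M^gr_{H₁} ≅ M^gr_{H₂/H₁}`. -/
theorem stmt_9 (s r : E → V) (hrow : ∀ v, {e : E | s e = v}.Finite)
    (H₁ H₂ : Set V) (h12 : H₁ ⊆ H₂)
    (h1 : ∀ e, s e ∈ H₁ → r e ∈ H₁) (h2 : ∀ e, s e ∈ H₂ → r e ∈ H₂)
    (h1sat : ∀ v, (∃ e, s e = v) → (∀ e, s e = v → r e ∈ H₁) → v ∈ H₁)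
    (h2sat : ∀ v, (∃ e, s e = v) → (∀ e, s e = v → r e ∈ H₂) → v ∈ H₂) :
    ∃ e : (modCon (subMgr s r H₁ H₂ h2)).Quotient ≃+ MgrQ s r H₁ H₂ h2,
      (∀ (v : ↥H₂) (i : ℤ), ↑v ∈ H₁ →
        e ((modCon (subMgr s r H₁ H₂ h2)).mk'
            ((addConGen (gradedRel s r H₂ h2)).mk' (Finsupp.single (v, i) 1))) = 0) ∧
      (∀ (v : ↥H₂) (hv : ↑v ∉ H₁) (i : ℤ),
        e ((modCon (subMgr s r H₁ H₂ h2)).mk'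
            ((addConGen (gradedRel s r H₂ h2)).mk' (Finsupp.single (v, i) 1))) =
          (addConGen (gradedRelQ s r H₁ H₂ h2)).mk'
            (Finsupp.single ((⟨↑v, v.2, hv⟩ : ↥(H₂ \ H₁)), i) 1)) := by
  classical
  let fwdMgr : Mgr s r H₂ h2 →+ MgrQ s r H₁ H₂ h2 :=
    AddCon.lift _ (fwdHom s r H₁ H₂ h2)
      (AddCon.addConGen_le.2 fun x y h => fwd_rel s r H₁ H₂ h2 hrow h1 h1sat x y h)
  have fwdMgr_single : ∀ p : ↥H₂ × ℤ,
      fwdMgr ((addConGen (gradedRel s r H₂ h2)).mk' (Finsupp.single p 1))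
        = fwdGen s r H₁ H₂ h2 p := fun p =>
    (AddCon.lift_mk' _ _).trans (fwdHom_single s r H₁ H₂ h2 p)
  have fwdMgr_I : ∀ x ∈ subMgr s r H₁ H₂ h2, fwdMgr x = 0 := by
    intro x hx
    refine AddSubmonoid.closure_induction ?_ (map_zero _) ?_ hx
    · rintro z ⟨v, j, hv, rfl⟩
      rw [fwdMgr_single]
      exact fwdGen_mem s r H₁ H₂ h2 (p := (v, j)) hv
    · intro a b _ _ ha hb
      rw [map_add, ha, hb, add_zero]
  let fwdQ : (modCon (subMgr s r H₁ H₂ h2)).Quotient →+ MgrQ s r H₁ H₂ h2 :=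
    AddCon.lift _ fwdMgr (by
      rintro a b ⟨i, hi, j, hj, hab⟩
      show fwdMgr a = fwdMgr b
      have h : fwdMgr (a + i) = fwdMgr (b + j) := by rw [hab]
      rwa [map_add, map_add, fwdMgr_I i hi, fwdMgr_I j hj, add_zero, add_zero] at h)
  let bwd : MgrQ s r H₁ H₂ h2 →+ (modCon (subMgr s r H₁ H₂ h2)).Quotient :=
    AddCon.lift _ (bwdHom s r H₁ H₂ h2)
      (AddCon.addConGen_le.2 fun x y h => bwd_rel s r H₁ H₂ h2 hrow x y h)
  have fwdQ_single : ∀ p : ↥H₂ × ℤ,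
      fwdQ ((modCon (subMgr s r H₁ H₂ h2)).mk'
          ((addConGen (gradedRel s r H₂ h2)).mk' (Finsupp.single p 1)))
        = fwdGen s r H₁ H₂ h2 p := fun p =>
    (AddCon.lift_mk' _ _).trans (fwdMgr_single p)
  have bwd_single : ∀ p : ↥(H₂ \ H₁) × ℤ,
      bwd ((addConGen (gradedRelQ s r H₁ H₂ h2)).mk' (Finsupp.single p 1))
        = bwdGen s r H₁ H₂ h2 p := fun p =>
    (AddCon.lift_mk' _ _).trans (bwdHom_single s r H₁ H₂ h2 p)
  have left1 : ∀ p : ↥H₂ × ℤ,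
      bwd (fwdQ ((modCon (subMgr s r H₁ H₂ h2)).mk'
          ((addConGen (gradedRel s r H₂ h2)).mk' (Finsupp.single p 1))))
        = (modCon (subMgr s r H₁ H₂ h2)).mk'
          ((addConGen (gradedRel s r H₂ h2)).mk' (Finsupp.single p 1)) := by
    intro p
    rw [fwdQ_single]
    by_cases hv : (p.1 : V) ∈ H₁
    · rw [fwdGen_mem s r H₁ H₂ h2 hv, map_zero]
      have hmem : (addConGen (gradedRel s r H₂ h2)).mk' (Finsupp.single p 1) ∈
          {x | ∃ (v : ↥H₂) (i : ℤ), ↑v ∈ H₁ ∧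
            x = (addConGen (gradedRel s r H₂ h2)).mk' (Finsupp.single (v, i) 1)} :=
        ⟨p.1, p.2, hv, rfl⟩
      exact (modCon_mk'_eq_zero (AddSubmonoid.subset_closure hmem)).symm
    · rw [fwdGen_not_mem s r H₁ H₂ h2 hv, bwd_single]
      rfl
  have right1 : ∀ p : ↥(H₂ \ H₁) × ℤ,
      fwdQ (bwd ((addConGen (gradedRelQ s r H₁ H₂ h2)).mk' (Finsupp.single p 1)))
        = (addConGen (gradedRelQ s r H₁ H₂ h2)).mk' (Finsupp.single p 1) := by
    intro p
    rw [bwd_single]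
    have h1' : bwdGen s r H₁ H₂ h2 p = (modCon (subMgr s r H₁ H₂ h2)).mk'
        ((addConGen (gradedRel s r H₂ h2)).mk'
          (Finsupp.single ((⟨(p.1 : V), p.1.2.1⟩ : ↥H₂), p.2) 1)) := rfl
    rw [h1', fwdQ_single]
    have hnm : ((⟨(p.1 : V), p.1.2.1⟩ : ↥H₂) : V) ∉ H₁ := p.1.2.2
    rw [fwdGen_not_mem s r H₁ H₂ h2 (p := ((⟨(p.1 : V), p.1.2.1⟩ : ↥H₂), p.2)) hnm]
  have left : ∀ q, bwd (fwdQ q) = q := by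
    intro q
    obtain ⟨x, rfl⟩ := AddCon.mk'_surjective q
    obtain ⟨y, rfl⟩ := AddCon.mk'_surjective x
    induction y using Finsupp.induction with
    | zero => erw [map_zero]
    | single_add p n f _ _ ih =>
      erw [map_add, map_add, map_add, map_add, ih]
      congr 1
      have hsm : (Finsupp.single p n : (↥H₂ × ℤ) →₀ ℕ) = n • Finsupp.single p 1 := by
        rw [Finsupp.smul_single, smul_eq_mul, mul_one]
      erw [hsm, map_nsmul, map_nsmul, map_nsmul, map_nsmul]
      exact congrArg (n • ·) (left1 p)
  have right : ∀ q, fwdQ (bwd q) = q := by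
    intro q
    obtain ⟨y, rfl⟩ := AddCon.mk'_surjective q
    induction y using Finsupp.induction with
    | zero => erw [map_zero]
    | single_add p n f _ _ ih =>
      erw [map_add, map_add, map_add, ih]
      congr 1
      have hsm : (Finsupp.single p n : (↥(H₂ \ H₁) × ℤ) →₀ ℕ) = n • Finsupp.single p 1 := by
        rw [Finsupp.smul_single, smul_eq_mul, mul_one]
      erw [hsm, map_nsmul, map_nsmul, map_nsmul]
      exact congrArg (n • ·) (right1 p)
  refine ⟨{ toFun := fwdQ, invFun := bwd, left_inv := left, right_inv := right,
            map_add' := fwdQ.map_add }, ?_, ?_⟩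
  · intro v i hv
    exact ((fwdQ_single (v, i)).trans (fwdGen_mem s r H₁ H₂ h2 (p := (v, i)) hv))
  · intro v hv i
    exact ((fwdQ_single (v, i)).trans (fwdGen_not_mem s r H₁ H₂ h2 (p := (v, i)) hv))

end Stmt9
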